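/- Let X be a Valdivia compact space of infinite weight κ. Then there exists a continuous inverse sequence (X_α, r^β_α, κ) indexed by the ordinals α < κ such that X is homeomorphic to its limit, each X_α is Valdivia compact of weight at most |α| + ℵ₀, and each bonding map r^β_α is a retraction. -/

import Mathlib

open Set Filter Topology

universe u v

/-- A `ι`-indexed family of topological spaces with bonding maps (the data of an
inverse sequence). -/
structure Tower (ι : Type v) [LinearOrder ι] where
  S : ι → Type u
  topo : ∀ α, TopologicalSpace (S α)
  r : ∀ ⦃α β : ι⦄, α ≤ β → S β → S α

attribute [instance] Tower.topo

namespace Tower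

variable {ι : Type v} [LinearOrder ι]

/-- The limit of the tower: its space of threads. -/
abbrev Lim (T : Tower.{u, v} ι) : Type (max u v) :=
  {x : ∀ α, T.S α // ∀ ⦃α β : ι⦄ (h : α ≤ β), T.r h (x β) = x α}

/-- The tower is a continuous inverse sequence of compact Hausdorff spaces:
all spaces are compact Hausdorff, the bonding maps are continuous surjections
satisfying the identity and composition laws, and at every limit point `δ` of the
index set the map `S δ → Π_{α<δ} S α` is injective. -/
structure IsContInvSeq (T : Tower.{u, v} ι) : Prop where
  compact : ∀ α, CompactSpace (T.S α)
  t2 : ∀ α, T2Space (T.S α)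
  continuous : ∀ ⦃α β : ι⦄ (h : α ≤ β), Continuous (T.r h)
  surjective : ∀ ⦃α β : ι⦄ (h : α ≤ β), Function.Surjective (T.r h)
  map_id : ∀ (α : ι) (x : T.S α), T.r (le_refl α) x = x
  map_comp : ∀ ⦃α β γ : ι⦄ (h₁ : α ≤ β) (h₂ : β ≤ γ) (x : T.S γ),
    T.r h₁ (T.r h₂ x) = T.r (h₁.trans h₂) x
  limit_inj : ∀ δ : ι, (∃ α, α < δ) → (∀ α, α < δ → ∃ β, α < β ∧ β < δ) →
    ∀ x y : T.S δ, (∀ (α : ι) (h : α < δ), T.r h.le x = T.r h.le y) → x = y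

end Tower

/-- A continuous surjection which admits a continuous right inverse. -/
def IsRetraction {X Y : Type*} [TopologicalSpace X] [TopologicalSpace Y]
    (f : X → Y) : Prop :=
  Continuous f ∧ Function.Surjective f ∧ ∃ g : Y → X, Continuous g ∧ f ∘ g = id

/-- `Σ(T)`: the points of the Tikhonov cube `[0,1]^T` with countable support. -/
def SigmaProd (T : Type*) : Set (T → unitInterval) :=
  {x | {t | x t ≠ 0}.Countable}

/-- A Valdivia embedding into the cube `[0,1]^T`. -/
def IsValdiviaEmbedding {X : Type*} [TopologicalSpace X] {T : Type*}
    (h : X → T → unitInterval) : Prop :=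
  Topology.IsEmbedding h ∧ Set.range h = closure (Set.range h ∩ SigmaProd T)

/-- A space is Valdivia compact if it admits a Valdivia embedding into some cube. -/
def IsValdivia (X : Type u) [TopologicalSpace X] : Prop :=
  ∃ (T : Type u) (h : X → T → unitInterval), IsValdiviaEmbedding h

/-- The weight of a topological space: the least cardinality of a base. -/
noncomputable def tweight (X : Type u) [TopologicalSpace X] : Cardinal.{u} :=
  sInf {c | ∃ B : Set (Set X), TopologicalSpace.IsTopologicalBasis B ∧ Cardinal.mk ↥B = c}


namespace Statement4Aux

open TopologicalSpace Cardinal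

lemma tweight_le_mk {X : Type u} [TopologicalSpace X] {B : Set (Set X)}
    (hB : IsTopologicalBasis B) : tweight X ≤ Cardinal.mk ↥B :=
  csInf_le (OrderBot.bddBelow _) ⟨B, hB, rfl⟩

lemma exists_basis_tweight (X : Type u) [TopologicalSpace X] :
    ∃ B : Set (Set X), IsTopologicalBasis B ∧ Cardinal.mk ↥B = tweight X :=
  csInf_mem (s := {c | ∃ B : Set (Set X), IsTopologicalBasis B ∧ Cardinal.mk ↥B = c})
    ⟨_, _, isTopologicalBasis_opens, rfl⟩

lemma tweight_le_of_isInducing {X Y : Type u} [TopologicalSpace X] [TopologicalSpace Y]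
    {f : X → Y} (hf : Topology.IsInducing f) : tweight X ≤ tweight Y := by
  obtain ⟨B, hB, hBw⟩ := exists_basis_tweight Y
  calc tweight X ≤ Cardinal.mk ↥((preimage f) '' B) := tweight_le_mk (hB.isInducing hf)
    _ ≤ Cardinal.mk ↥B := Cardinal.mk_image_le
    _ = tweight Y := hBw

lemma tweight_le_one_of_subsingleton (X : Type u) [TopologicalSpace X] [Subsingleton X] :
    tweight X ≤ 1 := by
  have hB : IsTopologicalBasis ({Set.univ} : Set (Set X)) := by
    refine isTopologicalBasis_of_isOpen_of_nhds (fun u hu => by simp [mem_singleton_iff.1 hu]) ?_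
    intro x U hxU hU
    exact ⟨Set.univ, rfl, Set.mem_univ x, fun y _ => (Subsingleton.elim y x) ▸ hxU⟩
  simpa using tweight_le_mk hB

lemma tweight_pi_le (ι : Type u) : tweight (ι → unitInterval) ≤ Cardinal.mk ι + Cardinal.aleph0 := by
  obtain ⟨C, hCc, -, hCb⟩ := exists_countable_basis unitInterval
  have := hCc.to_subtype
  have hB := isTopologicalBasis_pi (fun _ : ι => hCb)
  refine le_trans (tweight_le_mk hB) ?_
  set 𝔅 := { S : Set (ι → unitInterval) | ∃ (U : ∀ _ : ι, Set unitInterval) (F : Finset ι),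
      (∀ i, i ∈ F → U i ∈ C) ∧ S = (F : Set ι).pi U } with h𝔅
  classical
  let φ : (Σ F : Finset ι, (∀ _ : ↥F, ↥C)) → Set (ι → unitInterval) := fun p =>
    (p.1 : Set ι).pi (fun i => if h : i ∈ p.1 then (p.2 ⟨i, h⟩ : Set unitInterval) else univ)
  have hsub : 𝔅 ⊆ range φ := by
    rintro S ⟨U, F, hU, rfl⟩
    refine ⟨⟨F, fun i => ⟨U i, hU i i.2⟩⟩, ?_⟩
    exact Set.pi_congr rfl (fun i hi => by simp [Finset.mem_coe.1 hi])
  calc Cardinal.mk ↥𝔅 ≤ Cardinal.mk ↥(range φ) := Cardinal.mk_le_mk_of_subset hsub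
    _ ≤ Cardinal.mk (Σ F : Finset ι, (∀ _ : ↥F, ↥C)) := Cardinal.mk_range_le
    _ = Cardinal.sum (fun F : Finset ι => Cardinal.mk (∀ _ : ↥F, ↥C)) := Cardinal.mk_sigma _
    _ ≤ Cardinal.sum (fun _ : Finset ι => Cardinal.aleph0) :=
        Cardinal.sum_le_sum _ _ (fun F => Cardinal.mk_le_aleph0)
    _ = Cardinal.mk (Finset ι) * Cardinal.aleph0 := Cardinal.sum_const' _ _
    _ ≤ (Cardinal.mk ι + Cardinal.aleph0) * Cardinal.aleph0 := by
        gcongr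
        rcases finite_or_infinite ι with hι | hι
        · exact le_trans Cardinal.mk_le_aleph0 (le_add_self)
        · exact (Cardinal.mk_finset_of_infinite ι).le.trans (self_le_add_right _ _)
    _ = Cardinal.mk ι + Cardinal.aleph0 := Cardinal.mul_eq_left
        (le_add_self) (le_add_self) Cardinal.aleph0_ne_zero


variable {T : Type u}

/-- projection of the cube onto coordinates in `S` (other coordinates set to `0`). -/
noncomputable def pr (S : Set T) (x : T → unitInterval) : T → unitInterval := S.indicator x

lemma pr_apply_mem {S : Set T} {x : T → unitInterval} {t : T} (ht : t ∈ S) :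
    pr S x t = x t := indicator_of_mem ht x

lemma pr_apply_not_mem {S : Set T} {x : T → unitInterval} {t : T} (ht : t ∉ S) :
    pr S x t = 0 := indicator_of_notMem ht x

lemma continuous_pr (S : Set T) : Continuous (pr S) := by
  classical
  refine continuous_pi fun t => ?_
  by_cases ht : t ∈ S
  · simpa [pr, indicator, if_pos ht] using (continuous_apply t)
  · simpa [pr, indicator, if_neg ht] using continuous_const (y := (0 : unitInterval))

lemma pr_pr {S S' : Set T} (h : S ⊆ S') (x : T → unitInterval) :
    pr S (pr S' x) = pr S x := by
  funext t
  by_cases ht : t ∈ S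
  · rw [pr_apply_mem ht, pr_apply_mem ht, pr_apply_mem (h ht)]
  · rw [pr_apply_not_mem ht, pr_apply_not_mem ht]

lemma pr_eq_self {S : Set T} {x : T → unitInterval} (h : ∀ t, x t ≠ 0 → t ∈ S) :
    pr S x = x := by
  funext t
  by_cases ht : t ∈ S
  · exact pr_apply_mem ht
  · rw [pr_apply_not_mem ht]
    by_contra h0
    exact ht (h t (fun e => h0 e.symm))

lemma pr_mem_sigmaProd {S : Set T} {x : T → unitInterval} (hx : x ∈ SigmaProd T) :
    pr S x ∈ SigmaProd T := by
  refine hx.mono ?_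
  intro t ht
  simp only [mem_setOf_eq] at ht ⊢
  by_cases hts : t ∈ S
  · rwa [pr_apply_mem hts] at ht
  · exact absurd (pr_apply_not_mem hts) ht

lemma support_pr_subset {S : Set T} {x : T → unitInterval} :
    {t | pr S x t ≠ 0} ⊆ S := by
  intro t ht
  by_contra hts
  exact ht (pr_apply_not_mem hts)

/-- `S` is self-sufficient for `K`. -/
def Good (K : Set (T → unitInterval)) (S : Set T) : Prop :=
  ∀ x ∈ K ∩ SigmaProd T, pr S x ∈ K

lemma Good.mem_of_mem {K : Set (T → unitInterval)} {S : Set T}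
    (hKcl : IsClosed K) (hKD : K ⊆ closure (K ∩ SigmaProd T)) (hG : Good K S) :
    ∀ x ∈ K, pr S x ∈ K := by
  intro x hx
  have h1 : pr S x ∈ closure (pr S '' (K ∩ SigmaProd T)) :=
    image_closure_subset_closure_image (continuous_pr S) ⟨x, hKD hx, rfl⟩
  refine hKcl.closure_subset (closure_mono ?_ h1)
  rintro - ⟨y, hy, rfl⟩
  exact hG y hy

/-- Good sets are closed under directed unions. -/
lemma good_sUnion {K : Set (T → unitInterval)} (hKcl : IsClosed K)
    {𝒞 : Set (Set T)} (hne : 𝒞.Nonempty) (hdir : DirectedOn (· ⊆ ·) 𝒞)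
    (hgood : ∀ S ∈ 𝒞, Good K S) : Good K (⋃₀ 𝒞) := by
  intro d hd
  obtain ⟨S₁, hS₁⟩ := hne
  -- a monotone sequence in 𝒞 covering the support of d inside ⋃₀ 𝒞
  have key : ∃ Q : ℕ → Set T, (∀ n, Q n ∈ 𝒞) ∧ (∀ m n, m ≤ n → Q m ⊆ Q n) ∧
      ({t | d t ≠ 0} ∩ ⋃₀ 𝒞) ⊆ ⋃ n, Q n := by
    have hC : ({t | d t ≠ 0} ∩ ⋃₀ 𝒞).Countable := hd.2.mono inter_subset_left
    rcases eq_empty_or_nonempty ({t | d t ≠ 0} ∩ ⋃₀ 𝒞) with hemp | hnemp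
    · exact ⟨fun _ => S₁, fun _ => hS₁, fun m n _ => le_refl _, by simp [hemp]⟩
    obtain ⟨f, hf⟩ := hC.exists_eq_range hnemp
    have hSel : ∀ n : ℕ, ∃ S ∈ 𝒞, f n ∈ S := by
      intro n
      have : f n ∈ ⋃₀ 𝒞 := by
        have : f n ∈ ({t | d t ≠ 0} ∩ ⋃₀ 𝒞) := by rw [hf]; exact mem_range_self n
        exact this.2
      obtain ⟨S, hS, hfS⟩ := this
      exact ⟨S, hS, hfS⟩
    choose Sel hSel𝒞 hSelf using hSel
    have hrec : ∀ n : ℕ, ∃ P : {S // S ∈ 𝒞}, True := fun n => ⟨⟨S₁, hS₁⟩, trivial⟩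
    -- build monotone chain
    let Q : ℕ → {S // S ∈ 𝒞} := fun n => Nat.rec ⟨Sel 0, hSel𝒞 0⟩
      (fun n p => ⟨(hdir p.1 p.2 (Sel (n+1)) (hSel𝒞 (n+1))).choose,
        (hdir p.1 p.2 (Sel (n+1)) (hSel𝒞 (n+1))).choose_spec.1⟩) n
    have hQstep : ∀ n, (Q n).1 ⊆ (Q (n+1)).1 ∧ Sel (n+1) ⊆ (Q (n+1)).1 := by
      intro n
      have := (hdir (Q n).1 (Q n).2 (Sel (n+1)) (hSel𝒞 (n+1))).choose_spec.2
      exact this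
    have hQmono : ∀ m n, m ≤ n → (Q m).1 ⊆ (Q n).1 := by
      intro m n hmn
      induction n with
      | zero => simp_all
      | succ k ih =>
        rcases Nat.lt_or_ge m (k+1) with h | h
        · exact (ih (Nat.lt_succ_iff.1 h)).trans (hQstep k).1
        · have : m = k + 1 := le_antisymm hmn h
          subst this; exact subset_rfl
    have hQSel : ∀ n, Sel n ⊆ (Q n).1 := by
      intro n
      cases n with
      | zero => exact subset_rfl
      | succ k => exact (hQstep k).2
    refine ⟨fun n => (Q n).1, fun n => (Q n).2, hQmono, ?_⟩
    intro t ht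
    rw [hf] at ht
    obtain ⟨n, rfl⟩ := ht
    exact mem_iUnion.2 ⟨n, hQSel n (hSelf n)⟩
  obtain ⟨Q, hQ𝒞, hQmono, hQcov⟩ := key
  -- convergence
  have htend : Tendsto (fun n => pr (Q n) d) atTop (𝓝 (pr (⋃₀ 𝒞) d)) := by
    rw [tendsto_pi_nhds]
    intro t
    rcases eq_or_ne (d t) 0 with h0 | h0
    · have : ∀ n, pr (Q n) d t = pr (⋃₀ 𝒞) d t := by
        intro n
        by_cases h1 : t ∈ Q n
        · rw [pr_apply_mem h1, pr_apply_mem (mem_sUnion.2 ⟨Q n, hQ𝒞 n, h1⟩), ]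
        · by_cases h2 : t ∈ ⋃₀ 𝒞
          · rw [pr_apply_not_mem h1, pr_apply_mem h2, h0]
          · rw [pr_apply_not_mem h1, pr_apply_not_mem h2]
      exact Tendsto.congr (fun n => (this n).symm) tendsto_const_nhds
    · by_cases h2 : t ∈ ⋃₀ 𝒞
      · have : t ∈ ⋃ n, Q n := hQcov ⟨h0, h2⟩
        obtain ⟨m, hm⟩ := mem_iUnion.1 this
        have : ∀ n ≥ m, pr (Q n) d t = pr (⋃₀ 𝒞) d t := by
          intro n hn
          rw [pr_apply_mem (hQmono m n hn hm), pr_apply_mem h2]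
        refine Tendsto.congr' ?_ tendsto_const_nhds
        filter_upwards [eventually_ge_atTop m] with n hn using (this n hn).symm
      · have : ∀ n, pr (Q n) d t = pr (⋃₀ 𝒞) d t := by
          intro n
          rw [pr_apply_not_mem (fun h => h2 (mem_sUnion.2 ⟨Q n, hQ𝒞 n, h⟩)),
            pr_apply_not_mem h2]
        exact Tendsto.congr (fun n => (this n).symm) tendsto_const_nhds
  exact hKcl.mem_of_tendsto htend (Eventually.of_forall fun n => hgood _ (hQ𝒞 n) d hd)


lemma finite_subset_mono {Q : ℕ → Set T} (hmono : ∀ m n, m ≤ n → Q m ⊆ Q n) {F : Set T}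
    (hF : F.Finite) (h : F ⊆ ⋃ n, Q n) : ∃ n, F ⊆ Q n := by
  refine Set.Finite.induction_on (motive := fun F _ => F ⊆ (⋃ n, Q n) → ∃ n, F ⊆ Q n) F hF
    (fun _ => ⟨0, empty_subset _⟩) ?_ h
  intro a s ha hs ih hsub
  obtain ⟨n, hn⟩ := ih ((subset_insert a s).trans hsub)
  obtain ⟨m, hm⟩ := mem_iUnion.1 (hsub (mem_insert a s))
  exact ⟨max n m, insert_subset (hmono m _ (le_max_right n m) hm)
    (hn.trans (hmono n _ (le_max_left n m)))⟩

/-- The closing-off lemma: every set of coordinates extends to a self-sufficient set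
of (almost) the same cardinality. -/
lemma exists_good_closure {K : Set (T → unitInterval)} (hKcl : IsClosed K) :
    ∃ clo : Set T → Set T, (∀ A, A ⊆ clo A) ∧ (∀ A, Good K (clo A)) ∧
      (∀ A, #(clo A) ≤ #A + ℵ₀) := by
  classical
  set D := K ∩ SigmaProd T with hD
  -- countable "dense trace" subsets of D over each finite coordinate set
  have hE : ∀ F : Finset T, ∃ E : Set (T → unitInterval), E.Countable ∧ E ⊆ D ∧
      ∀ V : Set (↥F → unitInterval), IsOpen V → ∀ d ∈ D, (fun t : ↥F => d ↑t) ∈ V →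
        ∃ e ∈ E, (fun t : ↥F => e ↑t) ∈ V := by
    intro F
    set res : (T → unitInterval) → (↥F → unitInterval) := fun d t => d ↑t with hres
    set Z := res '' D with hZ
    obtain ⟨Q, hQc, hQd⟩ := exists_countable_dense ↥Z
    have hpick : ∀ z : ↥Z, ∃ d ∈ D, res d = ↑z := fun z => by
      obtain ⟨d, hd, hdz⟩ := z.2; exact ⟨d, hd, hdz⟩
    choose pick hpickD hpickres using hpick
    refine ⟨pick '' Q, (hQc.image _), by rintro - ⟨q, -, rfl⟩; exact hpickD q, ?_⟩
    intro V hV d hd hdV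
    have hz : (⟨res d, ⟨d, hd, rfl⟩⟩ : ↥Z) ∈ (Subtype.val ⁻¹' V) := hdV
    have hopen : IsOpen (Subtype.val ⁻¹' V : Set ↥Z) := hV.preimage continuous_subtype_val
    obtain ⟨q, hqQ, hqV⟩ := hQd.exists_mem_open hopen ⟨_, hz⟩
    refine ⟨pick q, mem_image_of_mem _ hqQ, ?_⟩
    show res (pick q) ∈ V
    rw [hpickres q]; exact hqV
  choose E hEc hED hEdense using hE
  -- one closure step
  set step : Set T → Set T := fun A =>
    A ∪ ⋃ (G : Finset ↥A), ⋃ e ∈ E (G.map (Function.Embedding.subtype _)), {t | e t ≠ 0}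
    with hstep
  have hstep_subset : ∀ A, A ⊆ step A := fun A => subset_union_left
  have hstep_card : ∀ A : Set T, #(step A) ≤ #A + ℵ₀ := by
    intro A
    refine (mk_union_le _ _).trans ?_
    have h1 : #(⋃ (G : Finset ↥A), ⋃ e ∈ E (G.map (Function.Embedding.subtype _)),
        {t | e t ≠ 0}) ≤ #(Finset ↥A) * ℵ₀ := by
      refine (mk_iUnion_le _).trans (mul_le_mul' le_rfl (ciSup_le' fun G => ?_))
      have hcnt : (⋃ e ∈ E (G.map (Function.Embedding.subtype _)), {t | e t ≠ 0}).Countable :=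
        (hEc _).biUnion fun e he => (hED _ he).2
      exact hcnt.le_aleph0
    have h2 : #(Finset ↥A) ≤ #A + ℵ₀ := by
      rcases finite_or_infinite ↥A with hι | hι
      · exact le_trans (Cardinal.mk_le_aleph0) le_add_self
      · exact (Cardinal.mk_finset_of_infinite _).le.trans (self_le_add_right _ _)
    refine le_trans (add_le_add le_rfl h1) ?_
    refine le_trans (add_le_add (self_le_add_right _ ℵ₀) (mul_le_mul' h2 le_rfl)) ?_
    rw [Cardinal.mul_eq_left le_add_self le_add_self Cardinal.aleph0_ne_zero]
    exact (Cardinal.add_eq_self le_add_self).le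
  refine ⟨fun A => ⋃ n, step^[n] A, ?_, ?_, ?_⟩
  · intro A
    exact (subset_iUnion (fun n => step^[n] A) 0)
  · -- goodness
    intro A d hd
    set S := ⋃ n, step^[n] A with hS
    have hiter_mono : ∀ m n, m ≤ n → step^[m] A ⊆ step^[n] A := by
      intro m n hmn
      induction n with
      | zero => simp_all
      | succ k ih =>
        rcases Nat.lt_or_ge m (k+1) with h | h
        · refine (ih (Nat.lt_succ_iff.1 h)).trans ?_
          rw [Function.iterate_succ_apply']
          exact hstep_subset _
        · have : m = k + 1 := le_antisymm hmn h
          subst this; exact subset_rfl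
    -- show pr S d ∈ closure D ⊆ K
    have hclos : pr S d ∈ closure D := by
      rw [mem_closure_iff]
      intro U hU hUx
      obtain ⟨F, u, h1, h2⟩ := isOpen_pi_iff.1 hU _ hUx
      set F₀ : Finset T := F.filter (· ∈ S) with hF₀
      have hF₀S : (F₀ : Set T) ⊆ S := by
        intro t ht
        exact (Finset.mem_filter.1 ht).2
      obtain ⟨n, hn⟩ := finite_subset_mono hiter_mono (F₀.finite_toSet) hF₀S
      set F' : Finset ↥(step^[n] A) := F₀.subtype _ with hF'
      have hF'map : F'.map (Function.Embedding.subtype _) = F₀ := by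
        rw [hF', Finset.subtype_map]
        exact Finset.filter_true_of_mem (fun t ht => hn ht)
      -- the open trace set
      set V : Set (↥F₀ → unitInterval) := univ.pi (fun t => u ↑t) with hV
      have hVopen : IsOpen V := isOpen_set_pi finite_univ
        (fun t _ => (h1 t (Finset.mem_of_mem_filter _ t.2)).1)
      have hdV : (fun t : ↥F₀ => d ↑t) ∈ V := by
        intro t _
        have htS : (t : T) ∈ S := (Finset.mem_filter.1 t.2).2
        have := (h1 t (Finset.mem_of_mem_filter _ t.2)).2
        rwa [pr_apply_mem htS] at this
      obtain ⟨e, heE, heV⟩ := hEdense F₀ V hVopen d hd hdV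
      refine ⟨e, h2 ?_, hED _ heE⟩
      intro t htF
      by_cases htS : t ∈ S
      · have htF₀ : t ∈ F₀ := Finset.mem_filter.2 ⟨htF, htS⟩
        exact heV ⟨t, htF₀⟩ (mem_univ _)
      · have he0 : e t = 0 := by
          by_contra h0
          have : t ∈ step^[n+1] A := by
            rw [Function.iterate_succ_apply']
            refine Or.inr ?_
            refine mem_iUnion.2 ⟨F', ?_⟩
            rw [hF'map]
            exact mem_biUnion heE h0
          exact htS (mem_iUnion.2 ⟨n+1, this⟩)
        have := (h1 t htF).2
        rw [pr_apply_not_mem htS] at this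
        rw [he0]
        exact this
    have : closure D ⊆ K := hKcl.closure_subset_iff.2 inter_subset_left
    exact this hclos
  · -- cardinality
    intro A
    have hiter : ∀ n, #(step^[n] A) ≤ #A + ℵ₀ := by
      intro n
      induction n with
      | zero => exact le_trans (le_refl _) (self_le_add_right _ _)
      | succ k ih =>
        rw [Function.iterate_succ_apply']
        refine (hstep_card _).trans ?_
        calc #(step^[k] A) + ℵ₀ ≤ (#A + ℵ₀) + ℵ₀ := by gcongr
          _ = #A + ℵ₀ := by rw [add_assoc, Cardinal.aleph0_add_aleph0]
    have hre : (⋃ n, step^[n] A) = ⋃ n : ULift.{u} ℕ, step^[n.down] A := by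
      ext t
      simp only [mem_iUnion]
      exact ⟨fun ⟨n, hn⟩ => ⟨⟨n⟩, hn⟩, fun ⟨n, hn⟩ => ⟨n.down, hn⟩⟩
    show #(⋃ n, step^[n] A) ≤ #A + ℵ₀
    rw [hre]
    refine le_trans (mk_iUnion_le _) ?_
    refine le_trans (mul_le_mul' (Cardinal.mk_le_aleph0) (ciSup_le' fun n => hiter n.down)) ?_
    rw [Cardinal.mul_eq_right le_add_self le_add_self Cardinal.aleph0_ne_zero]

lemma exists_separating {X T : Type u} [TopologicalSpace X] (h : X → T → unitInterval)
    (hemb : Topology.IsEmbedding h) :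
    ∃ S₀ : Set T, #S₀ ≤ tweight X * tweight X ∧
      ∀ x y : X, (∀ t ∈ S₀, h x t = h y t) → x = y := by
  classical
  obtain ⟨B, hB, hBw⟩ := exists_basis_tweight X
  set sel : ↥B × ↥B → Set T := fun p =>
    if hp : ∃ t : T, ∀ a ∈ (p.1 : Set X), ∀ b ∈ (p.2 : Set X), h a t ≠ h b t
    then {hp.choose} else ∅ with hsel
  refine ⟨⋃ p : ↥B × ↥B, sel p, ?_, ?_⟩
  · refine le_trans (mk_iUnion_le _) ?_
    have h1 : ∀ p : ↥B × ↥B, #(sel p) ≤ 1 := by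
      intro p
      rw [hsel]
      simp only []
      by_cases hp : ∃ t : T, ∀ a ∈ (p.1 : Set X), ∀ b ∈ (p.2 : Set X), h a t ≠ h b t
      · rw [dif_pos hp]; simp
      · rw [dif_neg hp]; simp
    refine le_trans (mul_le_mul' le_rfl (ciSup_le' h1)) ?_
    rw [mul_one]
    simp only [Cardinal.mk_prod, Cardinal.lift_id, hBw]
    exact le_rfl
  · intro x y hxy
    by_contra hne
    have hhne : h x ≠ h y := fun e => hne (hemb.injective e)
    obtain ⟨t₀, ht₀⟩ : ∃ t₀, h x t₀ ≠ h y t₀ := by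
      by_contra hc
      push_neg at hc
      exact hhne (funext hc)
    set W : Set (X × X) := {p : X × X | h p.1 t₀ = h p.2 t₀}ᶜ with hW
    have hWopen : IsOpen W := (isClosed_eq
      ((continuous_apply t₀).comp (hemb.continuous.comp continuous_fst))
      ((continuous_apply t₀).comp (hemb.continuous.comp continuous_snd))).isOpen_compl
    have hxyW : (x, y) ∈ W := ht₀
    obtain ⟨v, hv, hxyv, hvW⟩ := (hB.prod hB).exists_subset_of_mem_open hxyW hWopen
    obtain ⟨U, hU, V, hV, rfl⟩ := hv
    have hp : ∃ t : T, ∀ a ∈ U, ∀ b ∈ V, h a t ≠ h b t := by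
      refine ⟨t₀, fun a ha b hb => ?_⟩
      exact hvW (mk_mem_prod ha hb)
    set p : ↥B × ↥B := (⟨U, hU⟩, ⟨V, hV⟩) with hpdef
    have hselp : sel p = {hp.choose} := by rw [hsel]; exact dif_pos hp
    have htmem : hp.choose ∈ ⋃ q : ↥B × ↥B, sel q :=
      mem_iUnion.2 ⟨p, by rw [hselp]; exact rfl⟩
    exact hp.choose_spec x hxyv.1 y hxyv.2 (hxy _ htmem)

end Statement4Aux

open Statement4Aux Cardinal

/-- every Valdivia compact space `X` of infinite weight `κ` is (up to
homeomorphism) the limit of a continuous inverse sequence, indexed by the ordinals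
`α < κ`, of Valdivia compact spaces `X_α` of weight `≤ |α| + ℵ₀` whose bonding maps
are retractions. -/
theorem statement4 {X : Type u} [TopologicalSpace X] [CompactSpace X] [T2Space X]
    (κ : Cardinal.{u}) (hκ : Cardinal.aleph0 ≤ κ) (hw : tweight X = κ)
    (hX : IsValdivia X) :
    ∃ T : Tower.{u, u} κ.ord.ToType,
      T.IsContInvSeq ∧
      (∀ α, IsValdivia (T.S α)) ∧
      (∀ α : κ.ord.ToType,
        tweight (T.S α) ≤ (@Ordinal.typein κ.ord.ToType (· < ·) isWellOrder_lt α).card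
          + Cardinal.aleph0) ∧
      (∀ ⦃α β : κ.ord.ToType⦄ (h : α ≤ β), IsRetraction (T.r h)) ∧
      Nonempty (X ≃ₜ T.Lim) := by
  classical
  obtain ⟨T, h, hemb, hval⟩ := hX
  -- index type facts
  have hord : κ.ord ≠ 0 := by
    intro h0
    have hc := Cardinal.card_ord κ
    rw [h0, Ordinal.card_zero] at hc
    rw [← hc] at hκ
    exact (Cardinal.aleph0_pos.not_ge (by exact_mod_cast hκ)).elim
  haveI hne : Nonempty κ.ord.ToType := Ordinal.toType_nonempty_iff_ne_zero.2 hord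
  haveI hnomax : NoMaxOrder κ.ord.ToType := Cardinal.noMaxOrder hκ
  have hmkι : #κ.ord.ToType = κ := by rw [Cardinal.mk_toType, Cardinal.card_ord]
  rcases isEmpty_or_nonempty T with hTe | hTne
  · exfalso
    haveI : Subsingleton X :=
      ⟨fun a b => hemb.injective (funext fun t => (hTe.elim t))⟩
    have h1 := tweight_le_one_of_subsingleton X
    rw [hw] at h1
    exact (Cardinal.one_lt_aleph0.not_ge (hκ.trans h1)).elim
  -- the ambient compactum
  set K : Set (T → unitInterval) := Set.range h with hK
  have hKcomp : IsCompact K := isCompact_range hemb.continuous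
  have hKcl : IsClosed K := hKcomp.isClosed
  have hKD : K ⊆ closure (K ∩ SigmaProd T) := hval.subset
  have hmemK : ∀ x : X, h x ∈ K := fun x => ⟨x, rfl⟩
  obtain ⟨clo, hclo_sub, hclo_good, hclo_card⟩ := exists_good_closure hKcl
  obtain ⟨S₀, hS₀card, hS₀sep⟩ := exists_separating h hemb
  have hS₀κ : #S₀ ≤ κ := by
    rwa [hw, Cardinal.mul_eq_self hκ] at hS₀card
  -- an enumeration of the separating set
  obtain ⟨f⟩ : Nonempty (↥S₀ ↪ κ.ord.ToType) := by
    rw [← Cardinal.le_def, hmkι]; exact hS₀κ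
  have ht₀ : T := Classical.arbitrary T
  set e : κ.ord.ToType → T :=
    fun i => if hi : ∃ s : ↥S₀, f s = i then ↑(hi.choose) else ht₀ with he
  have hS₀e : S₀ ⊆ Set.range e := by
    intro s hs
    refine ⟨f ⟨s, hs⟩, ?_⟩
    have hi : ∃ s' : ↥S₀, f s' = f ⟨s, hs⟩ := ⟨⟨s, hs⟩, rfl⟩
    show (if hi' : ∃ s' : ↥S₀, f s' = f ⟨s, hs⟩ then (↑(hi'.choose) : T) else ht₀) = s
    rw [dif_pos hi]
    have h2 : hi.choose = ⟨s, hs⟩ := f.injective hi.choose_spec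
    rw [h2]
  -- the chain of self-sufficient coordinate sets
  set Fm : Set T := clo ∅ with hFm
  have wf : WellFounded ((· < ·) : κ.ord.ToType → κ.ord.ToType → Prop) := IsWellFounded.wf
  obtain ⟨F, hFeq⟩ : ∃ F : κ.ord.ToType → Set T, ∀ α,
      F α = clo ({e α} ∪ Fm ∪ ⋃ β : {β : κ.ord.ToType // β < α}, F β.1) :=
    ⟨wf.fix (fun α rec => clo ({e α} ∪ Fm ∪ ⋃ β : {β : κ.ord.ToType // β < α}, rec β.1 β.2)),
     fun α => wf.fix_eq _ α⟩
  have hFgood : ∀ α, Good K (F α) := fun α => (hFeq α) ▸ hclo_good _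
  have heF : ∀ α, e α ∈ F α := fun α => by
    rw [hFeq α]; exact hclo_sub _ (Or.inl (Or.inl rfl))
  have hFm_sub : ∀ α, Fm ⊆ F α := by
    intro α t ht
    rw [hFeq α]
    exact hclo_sub _ (Or.inl (Or.inr ht))
  have hFlt : ∀ {β α : κ.ord.ToType}, β < α → F β ⊆ F α := by
    intro β α hβα t ht
    rw [hFeq α]
    exact hclo_sub _ (Or.inr (mem_iUnion.2 ⟨⟨β, hβα⟩, ht⟩))
  have hFmono : ∀ {β α : κ.ord.ToType}, β ≤ α → F β ⊆ F α := by
    intro β α hle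
    rcases hle.lt_or_eq with hlt | rfl
    · exact hFlt hlt
    · exact subset_rfl
  have hFmcard : #Fm ≤ ℵ₀ := by
    refine (hclo_card ∅).trans ?_
    rw [Cardinal.mk_emptyCollection, zero_add]
  have hcardlt : ∀ {β α : κ.ord.ToType}, β < α →
      (@Ordinal.typein κ.ord.ToType (· < ·) isWellOrder_lt β).card ≤
      (@Ordinal.typein κ.ord.ToType (· < ·) isWellOrder_lt α).card :=
    fun hβα => Ordinal.card_le_card
      ((@Ordinal.typein_lt_typein _ (· < ·) isWellOrder_lt _ _).2 hβα).le
  have hcard_idx : ∀ α : κ.ord.ToType, #{β : κ.ord.ToType // β < α} =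
      (@Ordinal.typein κ.ord.ToType (· < ·) isWellOrder_lt α).card :=
    fun α => @Ordinal.card_typein _ (· < ·) isWellOrder_lt α
  have hFcard : ∀ α : κ.ord.ToType,
      #(F α) ≤ (@Ordinal.typein κ.ord.ToType (· < ·) isWellOrder_lt α).card + ℵ₀ := by
    intro α
    refine wf.induction
      (C := fun α => #(F α) ≤ (@Ordinal.typein κ.ord.ToType (· < ·) isWellOrder_lt α).card + ℵ₀) α ?_
    intro α ih
    rw [hFeq α]
    refine (hclo_card _).trans ?_
    have hcinf : (ℵ₀ : Cardinal) ≤ (@Ordinal.typein κ.ord.ToType (· < ·) isWellOrder_lt α).card + ℵ₀ := le_add_self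
    have h1 : #({e α} : Set T) ≤ (@Ordinal.typein κ.ord.ToType (· < ·) isWellOrder_lt α).card + ℵ₀ := by
      rw [Cardinal.mk_singleton]
      exact le_trans Cardinal.one_le_aleph0 hcinf
    have h3 : #(⋃ β : {β : κ.ord.ToType // β < α}, F β.1)
        ≤ (@Ordinal.typein κ.ord.ToType (· < ·) isWellOrder_lt α).card + ℵ₀ := by
      refine le_trans mk_iUnion_le_sum_mk ?_
      refine le_trans (Cardinal.sum_le_sum _
        (fun _ => (@Ordinal.typein κ.ord.ToType (· < ·) isWellOrder_lt α).card + ℵ₀) ?_) ?_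
      · intro β
        refine (ih β.1 β.2).trans ?_
        exact add_le_add (hcardlt β.2) le_rfl
      · rw [Cardinal.sum_const']
        have hidx : #{β : κ.ord.ToType // β < α} ≤ (@Ordinal.typein κ.ord.ToType (· < ·) isWellOrder_lt α).card + ℵ₀ := by
          rw [hcard_idx α]
          exact self_le_add_right _ _
        refine le_trans (mul_le_mul' hidx le_rfl) ?_
        rw [Cardinal.mul_eq_self hcinf]
    refine le_trans (add_le_add (le_trans (mk_union_le _ _)
      (le_trans (add_le_add (le_trans (mk_union_le _ _)
        (le_trans (add_le_add h1 (hFmcard.trans hcinf))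
          (Cardinal.add_eq_self hcinf).le)) h3) (Cardinal.add_eq_self hcinf).le)) le_rfl) ?_
    rw [add_assoc, Cardinal.aleph0_add_aleph0]
  -- the coordinate sets of the tower
  set Sν : κ.ord.ToType → Set T :=
    fun α => Fm ∪ ⋃ β : {β : κ.ord.ToType // β < α}, F β.1 with hSνdef
  have hmemSν₁ : ∀ {α : κ.ord.ToType} {t : T}, t ∈ Fm → t ∈ Sν α :=
    fun ht => mem_union_left _ ht
  have hmemSν₂ : ∀ {α β : κ.ord.ToType} {t : T}, β < α → t ∈ F β → t ∈ Sν α :=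
    fun hβα ht => mem_union_right _ (mem_iUnion.2 ⟨⟨_, hβα⟩, ht⟩)
  have hSνmono : ∀ {α β : κ.ord.ToType}, α ≤ β → Sν α ⊆ Sν β := by
    intro α β hαβ t ht
    rcases (mem_union _ _ _).1 ht with ht | ht
    · exact hmemSν₁ ht
    · obtain ⟨⟨γ, hγ⟩, htγ⟩ := mem_iUnion.1 ht
      exact hmemSν₂ (lt_of_lt_of_le hγ hαβ) htγ
  have hSνgood : ∀ α, Good K (Sν α) := by
    intro α
    have hU : Sν α = ⋃₀ (insert Fm {S | ∃ β : {β : κ.ord.ToType // β < α}, S = F β.1}) := by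
      ext t
      constructor
      · intro ht
        rcases (mem_union _ _ _).1 ht with ht | ht
        · exact ⟨Fm, mem_insert _ _, ht⟩
        · obtain ⟨β, htβ⟩ := mem_iUnion.1 ht
          exact ⟨F β.1, mem_insert_of_mem _ ⟨β, rfl⟩, htβ⟩
      · rintro ⟨S, hS, htS⟩
        rcases mem_insert_iff.1 hS with rfl | ⟨β, rfl⟩
        · exact hmemSν₁ htS
        · exact hmemSν₂ β.2 htS
    rw [hU]
    refine good_sUnion hKcl ⟨Fm, mem_insert _ _⟩ ?_ ?_
    · intro S₁ h₁ S₂ h₂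
      rcases mem_insert_iff.1 h₁ with rfl | ⟨β, rfl⟩
      · rcases mem_insert_iff.1 h₂ with rfl | ⟨γ, rfl⟩
        · exact ⟨Fm, mem_insert _ _, subset_rfl, subset_rfl⟩
        · exact ⟨F γ.1, mem_insert_of_mem _ ⟨γ, rfl⟩, hFm_sub γ.1, subset_rfl⟩
      · rcases mem_insert_iff.1 h₂ with rfl | ⟨γ, rfl⟩
        · exact ⟨F β.1, mem_insert_of_mem _ ⟨β, rfl⟩, subset_rfl, hFm_sub β.1⟩
        · rcases le_total β.1 γ.1 with hle | hle
          · exact ⟨F γ.1, mem_insert_of_mem _ ⟨γ, rfl⟩, hFmono hle, subset_rfl⟩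
          · exact ⟨F β.1, mem_insert_of_mem _ ⟨β, rfl⟩, subset_rfl, hFmono hle⟩
    · intro S hS
      rcases mem_insert_iff.1 hS with rfl | ⟨β, rfl⟩
      · rw [hFm]; exact hclo_good ∅
      · exact hFgood β.1
  have hSνcard : ∀ α : κ.ord.ToType,
      #(Sν α) ≤ (@Ordinal.typein κ.ord.ToType (· < ·) isWellOrder_lt α).card + ℵ₀ := by
    intro α
    have hcinf : (ℵ₀ : Cardinal) ≤ (@Ordinal.typein κ.ord.ToType (· < ·) isWellOrder_lt α).card + ℵ₀ := le_add_self
    have h3 : #(⋃ β : {β : κ.ord.ToType // β < α}, F β.1)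
        ≤ (@Ordinal.typein κ.ord.ToType (· < ·) isWellOrder_lt α).card + ℵ₀ := by
      refine le_trans mk_iUnion_le_sum_mk ?_
      refine le_trans (Cardinal.sum_le_sum _
        (fun _ => (@Ordinal.typein κ.ord.ToType (· < ·) isWellOrder_lt α).card + ℵ₀) ?_) ?_
      · intro β
        refine (hFcard β.1).trans ?_
        exact add_le_add (hcardlt β.2) le_rfl
      · rw [Cardinal.sum_const']
        have hidx : #{β : κ.ord.ToType // β < α} ≤ (@Ordinal.typein κ.ord.ToType (· < ·) isWellOrder_lt α).card + ℵ₀ := by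
          rw [hcard_idx α]
          exact self_le_add_right _ _
        refine le_trans (mul_le_mul' hidx le_rfl) ?_
        rw [Cardinal.mul_eq_self hcinf]
    refine le_trans (mk_union_le _ _) ?_
    refine le_trans (add_le_add (hFmcard.trans hcinf) h3) ?_
    exact (Cardinal.add_eq_self hcinf).le
  have hGoodK : ∀ α, ∀ x ∈ K, pr (Sν α) x ∈ K :=
    fun α => Good.mem_of_mem hKcl hKD (hSνgood α)
  -- the spaces of the tower
  set A : κ.ord.ToType → Set (T → unitInterval) := fun α => pr (Sν α) '' K with hA
  have hAcomp : ∀ α, IsCompact (A α) := fun α => hKcomp.image (continuous_pr _)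
  have hAK : ∀ α, A α ⊆ K := by
    rintro α - ⟨k, hk, rfl⟩
    exact hGoodK α k hk
  have hAfix : ∀ α, ∀ y ∈ A α, pr (Sν α) y = y := by
    rintro α - ⟨k, hk, rfl⟩
    exact pr_pr subset_rfl k
  have hAmem : ∀ α y, y ∈ K → pr (Sν α) y = y → y ∈ A α := fun α y hyK hfix => ⟨y, hyK, hfix⟩
  have hAmono : ∀ {α β}, α ≤ β → A α ⊆ A β := by
    intro α β hle y hy
    refine hAmem β y (hAK α hy) ?_
    refine pr_eq_self fun t ht => ?_
    have h1 : t ∈ Sν α := by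
      rw [← hAfix α y hy] at ht
      exact support_pr_subset ht
    exact hSνmono hle h1
  -- the tower
  refine ⟨⟨fun α => ↥(A α), fun α => inferInstance,
    fun α β hle y => ⟨pr (Sν α) y.1, by
      obtain ⟨k, hk, hky⟩ := y.2
      exact ⟨k, hk, by rw [← hky, pr_pr (hSνmono hle)]⟩⟩⟩, ?_, ?_, ?_, ?_, ?_⟩
  · -- continuous inverse sequence
    refine ⟨?_, ?_, ?_, ?_, ?_, ?_, ?_⟩
    · intro α
      exact isCompact_iff_compactSpace.1 (hAcomp α)
    · intro α
      infer_instance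
    · intro α β hle
      exact Continuous.subtype_mk ((continuous_pr _).comp continuous_subtype_val) _
    · intro α β hle y
      obtain ⟨k, hk, hky⟩ := y.2
      refine ⟨⟨pr (Sν β) k, ⟨k, hk, rfl⟩⟩, ?_⟩
      apply Subtype.ext
      show pr (Sν α) (pr (Sν β) k) = y.1
      rw [pr_pr (hSνmono hle), hky]
    · intro α x
      apply Subtype.ext
      show pr (Sν α) x.1 = x.1
      exact hAfix α x.1 x.2
    · intro α β γ h₁ h₂ x
      apply Subtype.ext
      show pr (Sν α) (pr (Sν β) x.1) = pr (Sν α) x.1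
      exact pr_pr (hSνmono h₁) _
    · intro δ hex hlim x y hxy
      obtain ⟨α₀, hα₀⟩ := hex
      apply Subtype.ext
      funext t
      have hval_eq : ∀ (α) (hα : α < δ), pr (Sν α) x.1 = pr (Sν α) y.1 := by
        intro α hα
        exact congrArg Subtype.val (hxy α hα)
      by_cases htδ : t ∈ Sν δ
      · rcases (mem_union _ _ _).1 htδ with ht | ht
        · have h1 := congrFun (hval_eq α₀ hα₀) t
          have htα : t ∈ Sν α₀ := hmemSν₁ ht
          rwa [pr_apply_mem htα, pr_apply_mem htα] at h1
        · obtain ⟨⟨β, hβδ⟩, htβ⟩ := mem_iUnion.1 ht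
          obtain ⟨γ, hβγ, hγδ⟩ := hlim β hβδ
          have htγ : t ∈ Sν γ := hmemSν₂ hβγ htβ
          have h1 := congrFun (hval_eq γ hγδ) t
          rwa [pr_apply_mem htγ, pr_apply_mem htγ] at h1
      · have hx0 : x.1 t = 0 := by rw [← hAfix δ x.1 x.2, pr_apply_not_mem htδ]
        have hy0 : y.1 t = 0 := by rw [← hAfix δ y.1 y.2, pr_apply_not_mem htδ]
        rw [hx0, hy0]
  · -- Valdivia factors
    intro α
    refine ⟨T, Subtype.val, Topology.IsEmbedding.subtypeVal, ?_⟩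
    rw [Subtype.range_coe]
    apply subset_antisymm
    · rintro - ⟨k, hk, rfl⟩
      have hk' : k ∈ closure (K ∩ SigmaProd T) := hKD hk
      have h2 : pr (Sν α) k ∈ closure (pr (Sν α) '' (K ∩ SigmaProd T)) :=
        image_closure_subset_closure_image (continuous_pr _) ⟨k, hk', rfl⟩
      refine closure_mono ?_ h2
      rintro - ⟨d, hd, rfl⟩
      exact ⟨⟨d, hd.1, rfl⟩, pr_mem_sigmaProd hd.2⟩
    · exact (hAcomp α).isClosed.closure_subset_iff.2 inter_subset_left
  · -- weight estimate
    intro α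
    have hrescont : Continuous (fun y : ↥(A α) => (fun t : ↥(Sν α) => y.1 ↑t)) :=
      continuous_pi fun t => (continuous_apply (t : T)).comp continuous_subtype_val
    have hresinj : Function.Injective (fun y : ↥(A α) => (fun t : ↥(Sν α) => y.1 ↑t)) := by
      intro y z hyz
      apply Subtype.ext
      funext t
      by_cases ht : t ∈ Sν α
      · exact congrFun hyz ⟨t, ht⟩
      · rw [← hAfix α y.1 y.2, ← hAfix α z.1 z.2, pr_apply_not_mem ht, pr_apply_not_mem ht]
    haveI : CompactSpace ↥(A α) := isCompact_iff_compactSpace.1 (hAcomp α)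
    have hres : Topology.IsInducing (fun y : ↥(A α) => (fun t : ↥(Sν α) => y.1 ↑t)) :=
      (hrescont.isClosedEmbedding hresinj).toIsEmbedding.toIsInducing
    refine le_trans (tweight_le_of_isInducing hres) ?_
    refine le_trans (tweight_pi_le ↥(Sν α)) ?_
    refine le_trans (add_le_add (hSνcard α) le_rfl) ?_
    rw [add_assoc, Cardinal.aleph0_add_aleph0]
  · -- retractions
    intro α β hle
    refine ⟨Continuous.subtype_mk ((continuous_pr _).comp continuous_subtype_val) _, ?_, ?_⟩
    · intro y
      obtain ⟨k, hk, hky⟩ := y.2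
      refine ⟨⟨pr (Sν β) k, ⟨k, hk, rfl⟩⟩, ?_⟩
      apply Subtype.ext
      show pr (Sν α) (pr (Sν β) k) = y.1
      rw [pr_pr (hSνmono hle), hky]
    · refine ⟨fun y => ⟨y.1, hAmono hle y.2⟩,
        Continuous.subtype_mk continuous_subtype_val _, ?_⟩
      funext y
      apply Subtype.ext
      show pr (Sν α) y.1 = y.1
      exact hAfix α y.1 y.2
  · -- the homeomorphism
    set Tw : Tower.{u, u} κ.ord.ToType := ⟨fun α => ↥(A α), fun α => inferInstance,
      fun α β hle y => ⟨pr (Sν α) y.1, by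
        obtain ⟨k, hk, hky⟩ := y.2
        exact ⟨k, hk, by rw [← hky, pr_pr (hSνmono hle)]⟩⟩⟩ with hTw
    show Nonempty (X ≃ₜ Tw.Lim)
    have hΦmem : ∀ (x : X) (α : κ.ord.ToType), pr (Sν α) (h x) ∈ A α :=
      fun x α => ⟨h x, hmemK x, rfl⟩
    set Φ : X → Tw.Lim := fun x => ⟨fun α => ⟨pr (Sν α) (h x), hΦmem x α⟩,
      fun α β hle => Subtype.ext (pr_pr (hSνmono hle) _)⟩ with hΦ
    have hΦcont : Continuous Φ := by
      refine Continuous.subtype_mk (continuous_pi fun α => Continuous.subtype_mk ?_ _) _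
      exact (continuous_pr _).comp hemb.continuous
    have hΦinj : Function.Injective Φ := by
      intro a b hab
      refine hS₀sep a b fun t ht => ?_
      obtain ⟨β, rfl⟩ := hS₀e ht
      obtain ⟨γ, hβγ⟩ := exists_gt β
      have htγ : e β ∈ Sν γ := hmemSν₂ hβγ (heF β)
      have h1 : pr (Sν γ) (h a) = pr (Sν γ) (h b) :=
        congrArg (fun z : Tw.Lim => (z.1 γ).1) hab
      have h2 := congrFun h1 (e β)
      rwa [pr_apply_mem htγ, pr_apply_mem htγ] at h2
    have hΦsurj : Function.Surjective Φ := by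
      intro x
      set yv : T → unitInterval :=
        fun t => if hex : ∃ α, t ∈ Sν α then (x.1 hex.choose).1 t else 0 with hyv
      have hcoh : ∀ (α : κ.ord.ToType) (t : T), t ∈ Sν α → yv t = (x.1 α).1 t := by
        intro α t ht
        have hex : ∃ γ, t ∈ Sν γ := ⟨α, ht⟩
        show (if hex' : ∃ γ, t ∈ Sν γ then (x.1 hex'.choose).1 t else 0) = (x.1 α).1 t
        rw [dif_pos hex]
        have hγt : t ∈ Sν hex.choose := hex.choose_spec
        rcases le_total α hex.choose with hle | hle
        · have hval2 : pr (Sν α) (x.1 hex.choose).1 = (x.1 α).1 :=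
            congrArg Subtype.val (x.2 hle)
          rw [← hval2, pr_apply_mem ht]
        · have hval2 : pr (Sν hex.choose) (x.1 α).1 = (x.1 hex.choose).1 :=
            congrArg Subtype.val (x.2 hle)
          rw [← hval2, pr_apply_mem hγt]
      have hprα : ∀ α, pr (Sν α) yv = (x.1 α).1 := by
        intro α
        funext t
        by_cases ht : t ∈ Sν α
        · rw [pr_apply_mem ht, hcoh α t ht]
        · rw [pr_apply_not_mem ht, ← hAfix α (x.1 α).1 (x.1 α).2, pr_apply_not_mem ht]
      have htend : Tendsto (fun α => (x.1 α).1) atTop (𝓝 yv) := by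
        rw [tendsto_pi_nhds]
        intro t
        by_cases hex : ∃ α, t ∈ Sν α
        · obtain ⟨α₀, hα₀⟩ := hex
          refine Tendsto.congr' ?_ tendsto_const_nhds
          filter_upwards [eventually_ge_atTop α₀] with α hα
          exact (hcoh α t (hSνmono hα hα₀))
        · have hall : ∀ α, (x.1 α).1 t = 0 := by
            intro α
            rw [← hAfix α (x.1 α).1 (x.1 α).2, pr_apply_not_mem (fun hc => hex ⟨α, hc⟩)]
          have hyvt : yv t = 0 := by
            show (if hex' : ∃ γ, t ∈ Sν γ then (x.1 hex'.choose).1 t else 0) = 0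
            rw [dif_neg hex]
          rw [hyvt]
          exact Tendsto.congr (fun α => (hall α).symm) tendsto_const_nhds
      have hyK : yv ∈ K := hKcl.mem_of_tendsto htend
        (Eventually.of_forall fun α => hAK α (x.1 α).2)
      rw [hK] at hyK
      obtain ⟨x₀, hx₀⟩ := hyK
      refine ⟨x₀, ?_⟩
      apply Subtype.ext
      funext α
      apply Subtype.ext
      show pr (Sν α) (h x₀) = (x.1 α).1
      rw [hx₀]
      exact hprα α
    exact ⟨Continuous.homeoOfEquivCompactToT2
      (f := Equiv.ofBijective Φ ⟨hΦinj, hΦsurj⟩) hΦcont⟩
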